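/- arXiv:2001.03262 — 2 statements merged into one kernel-verified Lean document; each statement's English description precedes it below -/
import Mathlib

section
/- Let f ∈ ℝ[x₁,…,xₙ] be a polynomial satisfying conditions (C1), (C2) and (C3), and let λ_f be a map of minimal barycentric coordinates of f. If for every vertex at infinity α ∈ V(f) the inequality f_α > Σ_{α*∈D(f), α*∉(2ℕ₀)ⁿ} |f_{α*}|·λ_f(α*,α) − Σ_{α*∈D(f), α*∈(2ℕ₀)ⁿ} min{0, f_{α*}}·λ_f(α*,α) holds, then f is coercive on ℝⁿ. -/
open MvPolynomial Filter

noncomputable section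

open scoped Classical

/-- The embedding of exponent vectors into `ℝⁿ`. -/
def expEmbed {n : ℕ} (α : Fin n →₀ ℕ) : Fin n → ℝ := fun i => (α i : ℝ)

/-- The Newton polytope at infinity `New∞(f) = conv(A(f) ∪ {0})`. -/
def newtonInfty {n : ℕ} (f : MvPolynomial (Fin n) ℝ) : Set (Fin n → ℝ) :=
  convexHull ℝ (expEmbed '' ((insert 0 f.support : Finset (Fin n →₀ ℕ)) : Set (Fin n →₀ ℕ)))

/-- The vertex set `V₀(f)` of the Newton polytope at infinity, as a
finset of exponent vectors. -/
def V0 {n : ℕ} (f : MvPolynomial (Fin n) ℝ) : Finset (Fin n →₀ ℕ) :=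
  (insert 0 f.support).filter fun α => expEmbed α ∈ Set.extremePoints ℝ (newtonInfty f)

/-- The set `V(f) = V₀(f) \ {0}` of vertices at infinity. -/
def Vinf {n : ℕ} (f : MvPolynomial (Fin n) ℝ) : Finset (Fin n →₀ ℕ) := (V0 f).erase 0

/-- An exponent vector with all entries even, i.e. a member of `(2ℕ₀)ⁿ`. -/
def IsEvenExp {n : ℕ} (α : Fin n →₀ ℕ) : Prop := ∀ i, Even (α i)

/-- Condition (C1): `V(f) ⊆ (2ℕ₀)ⁿ`. -/
def CondC1 {n : ℕ} (f : MvPolynomial (Fin n) ℝ) : Prop := ∀ α ∈ Vinf f, IsEvenExp α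

/-- Condition (C2): positive coefficients at all vertices at infinity. -/
def CondC2 {n : ℕ} (f : MvPolynomial (Fin n) ℝ) : Prop := ∀ α ∈ Vinf f, 0 < f.coeff α

/-- Condition (C3): `V(f)` contains a vector `2 kᵢ eᵢ` for every `i`. -/
def CondC3 {n : ℕ} (f : MvPolynomial (Fin n) ℝ) : Prop :=
  ∀ i : Fin n, ∃ k : ℕ, 0 < k ∧ Finsupp.single i (2 * k) ∈ Vinf f

/-- An exponent vector of `f` is gem degenerate if it is no vertex at infinity but lies in
some nonempty face of `New∞(f)` not containing the origin. -/
def IsGemDegenerate {n : ℕ} (f : MvPolynomial (Fin n) ℝ) (α : Fin n →₀ ℕ) : Prop :=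
  α ∈ f.support ∧ α ∉ Vinf f ∧
    ∃ G : Set (Fin n → ℝ), G.Nonempty ∧ IsExtreme ℝ (newtonInfty f) G ∧
      (0 : Fin n → ℝ) ∉ G ∧ expEmbed α ∈ G

/-- The set `D(f)` of gem degenerate exponent vectors of `f`. -/
def Dfin {n : ℕ} (f : MvPolynomial (Fin n) ℝ) : Finset (Fin n →₀ ℕ) :=
  f.support.filter fun α => IsGemDegenerate f α

/-- `f` is gem regular if `D(f) = ∅`. -/
def GemRegular {n : ℕ} (f : MvPolynomial (Fin n) ℝ) : Prop := ∀ α, ¬ IsGemDegenerate f α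

/-- `V₀ᶜ(f) = A(f) \ V₀(f)`. -/
def V0c {n : ℕ} (f : MvPolynomial (Fin n) ℝ) : Finset (Fin n →₀ ℕ) := f.support \ V0 f

/-- A map of minimal barycentric coordinates of `f`. -/
def IsMinBary {n : ℕ} (f : MvPolynomial (Fin n) ℝ)
    (lam : (Fin n →₀ ℕ) → (Fin n →₀ ℕ) → ℝ) : Prop :=
  (∀ αs α, 0 ≤ lam αs α ∧ lam αs α ≤ 1) ∧
  ∀ αs ∈ V0c f, ∃ W : Finset (Fin n →₀ ℕ), W ⊆ V0 f ∧
    AffineIndependent ℝ (fun w : W => expEmbed (w : Fin n →₀ ℕ)) ∧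
    (∀ α ∈ W, 0 < lam αs α) ∧
    (∀ α ∈ V0 f, α ∉ W → lam αs α = 0) ∧
    (∑ α ∈ W, lam αs α) = 1 ∧
    (∑ α ∈ W, lam αs α • expEmbed α) = expEmbed αs

/-- `W_{α*}(λ_f)`, the minimal vertex representation of `α*` corresponding to `λ_f`. -/
def Wfin {n : ℕ} (f : MvPolynomial (Fin n) ℝ)
    (lam : (Fin n →₀ ℕ) → (Fin n →₀ ℕ) → ℝ) (αs : Fin n →₀ ℕ) : Finset (Fin n →₀ ℕ) :=
  (V0 f).filter fun α => 0 < lam αs α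

/-- The circuit number `Θ(f, λ_f, α*)`. -/
def circuitNumber {n : ℕ} (f : MvPolynomial (Fin n) ℝ)
    (lam : (Fin n →₀ ℕ) → (Fin n →₀ ℕ) → ℝ) (αs : Fin n →₀ ℕ) : ℝ :=
  ∏ α ∈ Wfin f lam αs, (f.coeff α / lam αs α) ^ (lam αs α)

/-- `g` is coercive on `ℝⁿ`: `g(x) → +∞` whenever `‖x‖ → +∞`. -/
def Coercive {n : ℕ} (g : (Fin n → ℝ) → ℝ) : Prop :=
  Tendsto g (comap (fun x : Fin n → ℝ => ‖x‖) atTop) atTop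



variable {ι : Type*}

/-- `y ^ (∑ w) = ∏ y ^ w` for nonneg base and nonneg exponents. -/
lemma rpow_sum_eq_prod (y : ℝ) (hy : 0 ≤ y) (s : Finset ι) (w : ι → ℝ)
    (hw : ∀ i ∈ s, 0 ≤ w i) :
    y ^ (∑ i ∈ s, w i) = ∏ i ∈ s, y ^ w i := by
  rcases hy.eq_or_lt with h | h
  · subst h
    by_cases hz : ∀ i ∈ s, w i = 0
    · rw [Finset.sum_eq_zero hz, Real.rpow_zero]
      exact (Finset.prod_eq_one fun i hi => by rw [hz i hi, Real.rpow_zero]).symm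
    · push_neg at hz
      obtain ⟨i, hi, hwi⟩ := hz
      have hsum : 0 < ∑ j ∈ s, w j :=
        Finset.sum_pos' hw ⟨i, hi, lt_of_le_of_ne (hw i hi) (Ne.symm hwi)⟩
      rw [Real.zero_rpow hsum.ne', Finset.prod_eq_zero hi (Real.zero_rpow hwi)]
  · induction s using Finset.induction with
    | empty => simp
    | insert _ _ hni ih =>
      rename_i a t
      rw [Finset.sum_insert hni, Finset.prod_insert hni, Real.rpow_add h,
        ih fun i hi => hw i (Finset.mem_insert_of_mem hi)]

/-- Young-type absorption: `s ^ T ≤ ε s + C`. -/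
lemma rpow_le_linear {T : ℝ} (hT0 : 0 ≤ T) (hT1 : T < 1) {ε : ℝ} (hε : 0 < ε) :
    ∃ C : ℝ, ∀ s : ℝ, 0 ≤ s → s ^ T ≤ ε * s + C := by
  set M : ℝ := max 1 ((1 / ε) ^ (1 / (1 - T))) with hM
  have hM1 : (1 : ℝ) ≤ M := le_max_left _ _
  have hM0 : (0 : ℝ) ≤ M := zero_le_one.trans hM1
  refine ⟨M ^ T, fun s hs => ?_⟩
  rcases le_or_gt s M with h | h
  · have : s ^ T ≤ M ^ T := Real.rpow_le_rpow hs h hT0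
    nlinarith [mul_nonneg hε.le hs]
  · have hs1 : (1 : ℝ) ≤ s := hM1.trans h.le
    have hs0 : (0 : ℝ) < s := lt_of_lt_of_le one_pos hs1
    have h1T : (0 : ℝ) < 1 - T := by linarith
    have key : 1 / ε ≤ s ^ (1 - T) := by
      have h2 : ((1 / ε) ^ (1 / (1 - T))) ^ (1 - T) ≤ s ^ (1 - T) :=
        Real.rpow_le_rpow (Real.rpow_nonneg (by positivity) _)
          ((le_max_right _ _).trans h.le) h1T.le
      rwa [← Real.rpow_mul (by positivity), one_div_mul_cancel h1T.ne', Real.rpow_one] at h2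
    have hsplit : s ^ T * s ^ (1 - T) = s := by
      rw [← Real.rpow_add hs0, add_sub_cancel, Real.rpow_one]
    have hpow_pos : (0 : ℝ) < s ^ (1 - T) := Real.rpow_pos_of_pos hs0 _
    have hMT : (0 : ℝ) ≤ M ^ T := Real.rpow_nonneg hM0 _
    have h1 : (1:ℝ) ≤ ε * s ^ (1 - T) := by
      calc (1:ℝ) = ε * (1/ε) := by field_simp
        _ ≤ ε * s ^ (1 - T) := mul_le_mul_of_nonneg_left key hε.le
    have : s ^ T ≤ ε * s := by
      calc s ^ T = s ^ T * 1 := (mul_one _).symm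
        _ ≤ s ^ T * (ε * s ^ (1 - T)) :=
            mul_le_mul_of_nonneg_left h1 (Real.rpow_nonneg hs0.le _)
        _ = ε * (s ^ T * s ^ (1 - T)) := by ring
        _ = ε * s := by rw [hsplit]
    linarith

variable {n : ℕ}

/-- The monomial as a product of vertex monomials raised to barycentric weights. -/
lemma mono_eq_prod (x : Fin n → ℝ) (s : Finset (Fin n →₀ ℕ)) (w : (Fin n →₀ ℕ) → ℝ)
    (hw : ∀ α ∈ s, 0 ≤ w α) (β : Fin n →₀ ℕ)
    (hβ : ∀ i, (β i : ℝ) = ∑ α ∈ s, w α * (α i : ℝ)) :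
    (∏ i, |x i| ^ (β i : ℕ)) = ∏ α ∈ s, (∏ i, |x i| ^ (α i : ℕ)) ^ (w α) := by
  have step1 : ∀ i, |x i| ^ (β i : ℕ) = ∏ α ∈ s, |x i| ^ (w α * (α i : ℝ)) := by
    intro i
    rw [← Real.rpow_natCast, hβ i,
      rpow_sum_eq_prod _ (abs_nonneg _) s _
        (fun α hα => mul_nonneg (hw α hα) (Nat.cast_nonneg _))]
  calc (∏ i, |x i| ^ (β i : ℕ))
      = ∏ i, ∏ α ∈ s, |x i| ^ (w α * (α i : ℝ)) := Finset.prod_congr rfl fun i _ => step1 i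
    _ = ∏ α ∈ s, ∏ i, |x i| ^ (w α * (α i : ℝ)) := Finset.prod_comm
    _ = ∏ α ∈ s, (∏ i, |x i| ^ (α i : ℕ)) ^ (w α) := by
        refine Finset.prod_congr rfl fun α _ => ?_
        rw [← Real.finset_prod_rpow _ _ (fun i _ => pow_nonneg (abs_nonneg _) _) (w α)]
        refine Finset.prod_congr rfl fun i _ => ?_
        rw [← Real.rpow_natCast |x i| (α i), ← Real.rpow_mul (abs_nonneg _), mul_comm]

/-- Weighted AM-GM for monomials. -/
lemma mono_le_weighted (x : Fin n → ℝ) (s : Finset (Fin n →₀ ℕ)) (w : (Fin n →₀ ℕ) → ℝ)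
    (hw : ∀ α ∈ s, 0 ≤ w α) (hw1 : ∑ α ∈ s, w α = 1) (β : Fin n →₀ ℕ)
    (hβ : ∀ i, (β i : ℝ) = ∑ α ∈ s, w α * (α i : ℝ)) :
    (∏ i, |x i| ^ (β i : ℕ)) ≤ ∑ α ∈ s, w α * ∏ i, |x i| ^ (α i : ℕ) := by
  rw [mono_eq_prod x s w hw β hβ]
  exact Real.geom_mean_le_arith_mean_weighted s w _ hw hw1
    (fun α _ => Finset.prod_nonneg fun i _ => pow_nonneg (abs_nonneg _) _)

/-- If `p` lies in no face of `P` avoiding `0`, it can be scaled outward and stay in `P`. -/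
lemma exists_scale_mem {P : Set (Fin n → ℝ)} (hP : Convex ℝ P) {p : Fin n → ℝ}
    (hp : p ∈ P)
    (H : ∀ G : Set (Fin n → ℝ), G.Nonempty → IsExtreme ℝ P G → (0 : Fin n → ℝ) ∉ G → p ∉ G) :
    ∃ t : ℝ, 1 < t ∧ t • p ∈ P := by
  by_contra hcon
  push_neg at hcon
  set G : Set (Fin n → ℝ) := {y | y ∈ P ∧ ∃ z ∈ P, p ∈ openSegment ℝ y z} with hG
  have hpG : p ∈ G := ⟨hp, p, hp, by rw [openSegment_same]; exact rfl⟩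
  have ext1 : ∀ x₁ x₂, x₁ ∈ P → x₂ ∈ P → ∀ w ∈ G, w ∈ openSegment ℝ x₁ x₂ → x₁ ∈ G := by
    rintro x₁ x₂ h₁ h₂ w ⟨hwP, z', hz', hseg'⟩ hseg
    obtain ⟨a₁, a₂, ha₁, ha₂, ha, hweq⟩ := hseg
    obtain ⟨c₁, c₂, hc₁, hc₂, hc, hpeq⟩ := hseg'
    set d : ℝ := c₁ * a₂ + c₂ with hd
    have hdp : 0 < d := by positivity
    refine ⟨h₁, (c₁ * a₂ / d) • x₂ + (c₂ / d) • z',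
      hP h₂ hz' (by positivity) (by positivity) (by field_simp; exact hd.symm), ?_⟩
    refine ⟨c₁ * a₁, d, by positivity, hdp, by rw [hd]; nlinarith, ?_⟩
    rw [← hpeq, ← hweq]
    match_scalars <;> field_simp <;> ring
  have hext : IsExtreme ℝ P G := by
    refine ⟨fun y hy => hy.1, fun x₁ h₁ x₂ h₂ w hw hseg => ?_⟩
    exact ext1 x₁ x₂ h₁ h₂ w hw hseg
  have h0 : (0 : Fin n → ℝ) ∉ G := by
    rintro ⟨-, z, hz, a, b, ha, hb, hab, habz⟩
    have hb1 : b < 1 := by linarith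
    have hbz : b • z = p := by rw [smul_zero, zero_add] at habz; exact habz
    refine hcon (1 / b) (by rw [lt_div_iff₀ hb]; linarith) ?_
    rw [← hbz, smul_smul, one_div_mul_cancel hb.ne', one_smul]
    exact hz
  exact H G ⟨p, hpG⟩ hext h0 hpG


variable {n : ℕ}

lemma expEmbed_injective : Function.Injective (expEmbed (n := n)) := by
  intro α β h
  ext i
  have := congrFun h i
  simpa [expEmbed] using this

lemma expEmbed_zero : expEmbed (0 : Fin n →₀ ℕ) = 0 := by
  funext i; simp [expEmbed]

lemma Vinf_subset_support (f : MvPolynomial (Fin n) ℝ) : Vinf f ⊆ f.support := by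
  intro α hα
  have h0 : α ≠ 0 := Finset.ne_of_mem_erase hα
  have : α ∈ V0 f := Finset.mem_of_mem_erase hα
  have := Finset.mem_filter.1 this
  rcases Finset.mem_insert.1 this.1 with h | h
  · exact absurd h h0
  · exact h

lemma mem_newtonInfty_of_mem_support (f : MvPolynomial (Fin n) ℝ) {α : Fin n →₀ ℕ}
    (hα : α ∈ f.support) : expEmbed α ∈ newtonInfty f :=
  subset_convexHull ℝ _ ⟨α, by simpa using Or.inr hα, rfl⟩

/-- The Newton polytope at infinity equals the convex hull of its vertex set. -/
lemma newtonInfty_eq_hull_V0 (f : MvPolynomial (Fin n) ℝ) :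
    newtonInfty f = convexHull ℝ (expEmbed '' (V0 f : Set (Fin n →₀ ℕ))) := by
  have hfin : (expEmbed '' ((insert 0 f.support : Finset (Fin n →₀ ℕ)) :
      Set (Fin n →₀ ℕ))).Finite := (Finset.finite_toSet _).image _
  have hcomp : IsCompact (newtonInfty f) := hfin.isCompact_convexHull ℝ
  have hconv : Convex ℝ (newtonInfty f) := convex_convexHull ℝ _
  have hEP : (newtonInfty f).extremePoints ℝ =
      expEmbed '' (V0 f : Set (Fin n →₀ ℕ)) := by
    apply Set.Subset.antisymm
    · intro y hy
      have hy' : y ∈ expEmbed '' ((insert 0 f.support : Finset (Fin n →₀ ℕ)) :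
          Set (Fin n →₀ ℕ)) := extremePoints_convexHull_subset hy
      obtain ⟨α, hα, rfl⟩ := hy'
      exact ⟨α, Finset.mem_coe.2 (Finset.mem_filter.2 ⟨Finset.mem_coe.1 hα, hy⟩), rfl⟩
    · rintro y ⟨α, hα, rfl⟩
      exact (Finset.mem_filter.1 (Finset.mem_coe.1 hα)).2
  have hKM := closure_convexHull_extremePoints hcomp hconv
  rw [hEP] at hKM
  have hclosed : IsClosed (convexHull ℝ (expEmbed '' (V0 f : Set (Fin n →₀ ℕ)))) :=
    ((Finset.finite_toSet _).image _).isClosed_convexHull ℝ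
  rw [← hKM, hclosed.closure_eq]

/-- Representation of a non-degenerate, non-vertex exponent with total weight `< 1`. -/
lemma nondegenerate_rep (f : MvPolynomial (Fin n) ℝ) {αs : Fin n →₀ ℕ}
    (hsupp : αs ∈ f.support) (hnv : αs ∉ Vinf f) (hnd : ¬ IsGemDegenerate f αs)
    (hne : αs ≠ 0) :
    ∃ μ : (Fin n →₀ ℕ) → ℝ, (∀ α, 0 ≤ μ α) ∧ (∑ α ∈ Vinf f, μ α < 1) ∧
      (∀ i, (αs i : ℝ) = ∑ α ∈ Vinf f, μ α * (α i : ℝ)) := by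
  have hp : expEmbed αs ∈ newtonInfty f := mem_newtonInfty_of_mem_support f hsupp
  have hconv : Convex ℝ (newtonInfty f) := convex_convexHull ℝ _
  -- scale outward
  obtain ⟨t, ht1, htP⟩ := exists_scale_mem hconv hp (by
    intro G hGne hGext hG0 hpG
    exact hnd ⟨hsupp, hnv, G, hGne, hGext, hG0, hpG⟩)
  have ht0 : (0:ℝ) < t := lt_trans one_pos ht1
  -- express t • p over the vertex set
  rw [newtonInfty_eq_hull_V0] at htP
  have himg : expEmbed '' ((V0 f : Set (Fin n →₀ ℕ))) =
      (((V0 f).image expEmbed : Finset (Fin n → ℝ)) : Set (Fin n → ℝ)) := by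
    rw [Finset.coe_image]
  rw [himg] at htP
  obtain ⟨w, hw0, hw1, hwsum⟩ := Finset.mem_convexHull'.1 htP
  set μ : (Fin n →₀ ℕ) → ℝ :=
    (fun α => if α ∈ Vinf f then t⁻¹ * w (expEmbed α) else 0) with hμ
  have hinj : Set.InjOn expEmbed (V0 f : Set (Fin n →₀ ℕ)) :=
    expEmbed_injective.injOn
  have hsum_img : ∑ α ∈ V0 f, w (expEmbed α) = 1 := by
    rw [← Finset.sum_image (fun a ha b hb h => hinj ha hb h)]
    exact hw1
  have hvec_img : ∑ α ∈ V0 f, w (expEmbed α) • expEmbed α = t • expEmbed αs := by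
    rw [Finset.sum_image (fun a ha b hb h => hinj ha hb h)] at hwsum
    exact hwsum
  have hw0' : ∀ α ∈ V0 f, 0 ≤ w (expEmbed α) := fun α hα =>
    hw0 _ (Finset.mem_image_of_mem _ hα)
  have hμ0 : ∀ α, 0 ≤ μ α := by
    intro α
    simp only [hμ]
    split
    · next h =>
        exact mul_nonneg (by positivity)
          (hw0' α (Finset.mem_of_mem_erase h))
    · exact le_rfl
  refine ⟨μ, hμ0, ?_, ?_⟩
  · have hsub : ∑ α ∈ Vinf f, w (expEmbed α) ≤ 1 := by
      rw [← hsum_img]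
      exact Finset.sum_le_sum_of_subset_of_nonneg (Finset.erase_subset _ _)
        (fun α hα _ => hw0' α hα)
    have : ∑ α ∈ Vinf f, μ α = t⁻¹ * ∑ α ∈ Vinf f, w (expEmbed α) := by
      rw [Finset.mul_sum]
      refine Finset.sum_congr rfl fun α hα => ?_
      simp only [hμ, if_pos hα]
    rw [this]
    calc t⁻¹ * ∑ α ∈ Vinf f, w (expEmbed α) ≤ t⁻¹ * 1 :=
          mul_le_mul_of_nonneg_left hsub (by positivity)
      _ < 1 := by
          rw [mul_one, inv_lt_one_iff₀]
          right; exact ht1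
  · have hvinf : ∑ α ∈ Vinf f, w (expEmbed α) • expEmbed α = t • expEmbed αs := by
      rw [← hvec_img]
      exact Finset.sum_erase _ (by rw [expEmbed_zero, smul_zero])
    have hvec : ∑ α ∈ Vinf f, μ α • expEmbed α = expEmbed αs := by
      have : ∑ α ∈ Vinf f, μ α • expEmbed α
          = t⁻¹ • ∑ α ∈ Vinf f, w (expEmbed α) • expEmbed α := by
        rw [Finset.smul_sum]
        refine Finset.sum_congr rfl fun α hα => ?_
        simp only [hμ, if_pos hα, smul_smul]
      rw [this, hvinf, smul_smul, inv_mul_cancel₀ ht0.ne', one_smul]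
    intro i
    have := congrFun hvec i
    simp only [Finset.sum_apply, Pi.smul_apply, smul_eq_mul, expEmbed] at this ⊢
    exact this.symm

/-- `m_x(α) = ∏ |x_i|^{α_i}`. -/
def mmono (x : Fin n → ℝ) (α : Fin n →₀ ℕ) : ℝ := ∏ i, |x i| ^ (α i)

lemma mmono_nonneg (x : Fin n → ℝ) (α : Fin n →₀ ℕ) : 0 ≤ mmono x α :=
  Finset.prod_nonneg fun i _ => pow_nonneg (abs_nonneg _) _

lemma mmono_zero (x : Fin n → ℝ) : mmono x (0 : Fin n →₀ ℕ) = 1 := by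
  simp [mmono]

lemma abs_xprod (x : Fin n → ℝ) (α : Fin n →₀ ℕ) :
    |∏ i, x i ^ (α i)| = mmono x α := by
  rw [Finset.abs_prod, mmono]
  exact Finset.prod_congr rfl fun i _ => (abs_pow _ _)

lemma xprod_of_even (x : Fin n → ℝ) {α : Fin n →₀ ℕ} (h : IsEvenExp α) :
    (∏ i, x i ^ (α i)) = mmono x α :=
  (Finset.prod_congr rfl fun i _ => ((h i).pow_abs (x i))).symm

/-- `S(x) = ∑_{α ∈ V(f)} m_x(α)`. -/
def Ssum (f : MvPolynomial (Fin n) ℝ) (x : Fin n → ℝ) : ℝ := ∑ α ∈ Vinf f, mmono x α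

lemma Ssum_nonneg (f : MvPolynomial (Fin n) ℝ) (x : Fin n → ℝ) : 0 ≤ Ssum f x :=
  Finset.sum_nonneg fun α _ => mmono_nonneg x α

lemma mmono_le_Ssum (f : MvPolynomial (Fin n) ℝ) (x : Fin n → ℝ) {α : Fin n →₀ ℕ}
    (hα : α ∈ Vinf f) : mmono x α ≤ Ssum f x :=
  Finset.single_le_sum (fun β _ => mmono_nonneg x β) hα

/-- Bound for gem degenerate exponents via the minimal barycentric map. -/
lemma deg_bound (f : MvPolynomial (Fin n) ℝ)
    (lam : (Fin n →₀ ℕ) → (Fin n →₀ ℕ) → ℝ) (hlam : IsMinBary f lam)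
    {αs : Fin n →₀ ℕ} (hαs : αs ∈ V0c f) (x : Fin n → ℝ) :
    mmono x αs ≤ (∑ α ∈ Vinf f, lam αs α * mmono x α) + lam αs 0 := by
  obtain ⟨W, hWsub, -, hpos, -, hsum1, hvec⟩ := hlam.2 αs hαs
  have hβ : ∀ i, ((αs i : ℕ) : ℝ) = ∑ α ∈ W, lam αs α * ((α i : ℕ) : ℝ) := by
    intro i
    have := congrFun hvec i
    simp only [Finset.sum_apply, Pi.smul_apply, smul_eq_mul, expEmbed] at this
    exact this.symm
  have hAM : mmono x αs ≤ ∑ α ∈ W, lam αs α * mmono x α :=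
    mono_le_weighted x W (lam αs) (fun α hα => (hpos α hα).le) hsum1 αs hβ
  refine hAM.trans ?_
  have hterm : ∀ α ∈ W, 0 ≤ lam αs α * mmono x α := fun α hα =>
    mul_nonneg (hpos α hα).le (mmono_nonneg x α)
  have hErase : W.erase 0 ⊆ Vinf f := by
    intro α hα
    exact Finset.mem_erase.2 ⟨(Finset.mem_erase.1 hα).1,
      hWsub (Finset.mem_of_mem_erase hα)⟩
  have hErase_le : ∑ α ∈ W.erase 0, lam αs α * mmono x α
      ≤ ∑ α ∈ Vinf f, lam αs α * mmono x α := by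
    refine Finset.sum_le_sum_of_subset_of_nonneg hErase fun α hα _ => ?_
    exact mul_nonneg (hlam.1 αs α).1 (mmono_nonneg x α)
  by_cases h0 : (0 : Fin n →₀ ℕ) ∈ W
  · have := Finset.add_sum_erase W (fun α => lam αs α * mmono x α) h0
    rw [← this]
    simp only [mmono_zero, mul_one]
    linarith
  · have : W.erase 0 = W := Finset.erase_eq_of_notMem h0
    rw [← this]
    have h00 : 0 ≤ lam αs 0 := (hlam.1 αs 0).1
    linarith

/-- Bound for non-degenerate exponents: absorbed by `ε S + C`. -/
lemma nd_bound (f : MvPolynomial (Fin n) ℝ) {αs : Fin n →₀ ℕ}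
    (hsupp : αs ∈ f.support) (hnv : αs ∉ Vinf f) (hnd : ¬ IsGemDegenerate f αs)
    (hne : αs ≠ 0) {ε : ℝ} (hε : 0 < ε) :
    ∃ C : ℝ, ∀ x : Fin n → ℝ, mmono x αs ≤ ε * Ssum f x + C := by
  obtain ⟨μ, hμ0, hμlt, hμrep⟩ := nondegenerate_rep f hsupp hnv hnd hne
  set T : ℝ := ∑ α ∈ Vinf f, μ α with hT
  have hT0 : 0 ≤ T := Finset.sum_nonneg fun α _ => hμ0 α
  have hTpos : 0 < T := by
    rcases hT0.eq_or_lt with h | h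
    · exfalso
      apply hne
      have hall : ∀ α ∈ Vinf f, μ α = 0 := by
        intro α hα
        by_contra hne'
        have : 0 < μ α := lt_of_le_of_ne (hμ0 α) (Ne.symm hne')
        have : 0 < T := Finset.sum_pos' (fun β _ => hμ0 β) ⟨α, hα, this⟩
        linarith [h.symm ▸ this]
      ext i
      have := hμrep i
      rw [Finset.sum_congr rfl (fun α hα => by rw [hall α hα, zero_mul])] at this
      simpa using this
    · exact h
  obtain ⟨C, hC⟩ := rpow_le_linear hT0 hμlt hε
  refine ⟨C, fun x => ?_⟩
  have heq : mmono x αs = ∏ α ∈ Vinf f, (mmono x α) ^ (μ α) :=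
    mono_eq_prod x (Vinf f) μ (fun α _ => hμ0 α) αs hμrep
  have hstep : ∏ α ∈ Vinf f, (mmono x α) ^ (μ α)
      = (∏ α ∈ Vinf f, (mmono x α) ^ (μ α / T)) ^ T := by
    rw [← Real.finset_prod_rpow _ _
      (fun α _ => Real.rpow_nonneg (mmono_nonneg x α) _) T]
    refine Finset.prod_congr rfl fun α _ => ?_
    rw [← Real.rpow_mul (mmono_nonneg x α), div_mul_cancel₀ _ hTpos.ne']
  have hAM : ∏ α ∈ Vinf f, (mmono x α) ^ (μ α / T) ≤ Ssum f x := by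
    have h1 : ∏ α ∈ Vinf f, (mmono x α) ^ (μ α / T)
        ≤ ∑ α ∈ Vinf f, (μ α / T) * mmono x α :=
      Real.geom_mean_le_arith_mean_weighted _ _ _
        (fun α _ => div_nonneg (hμ0 α) hT0)
        (by rw [← Finset.sum_div, ← hT, div_self hTpos.ne'])
        (fun α _ => mmono_nonneg x α)
    refine h1.trans (Finset.sum_le_sum fun α hα => ?_)
    have hle1 : μ α / T ≤ 1 := by
      rw [div_le_one hTpos]
      exact Finset.single_le_sum (fun β _ => hμ0 β) hα
    nlinarith [mmono_nonneg x α, hμ0 α]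
  calc mmono x αs = (∏ α ∈ Vinf f, (mmono x α) ^ (μ α / T)) ^ T := by rw [heq, hstep]
    _ ≤ (Ssum f x) ^ T := Real.rpow_le_rpow
        (Finset.prod_nonneg fun α _ => Real.rpow_nonneg (mmono_nonneg x α) _) hAM hT0
    _ ≤ ε * Ssum f x + C := hC _ (Ssum_nonneg f x)

/-- Theorem: sufficient condition for coercivity.
If `f` satisfies (C1)-(C3), `λ_f` is a map of minimal barycentric coordinates of `f`, and for
every vertex at infinity `α ∈ V(f)` the coefficient `f_α` exceeds
`Σ_{α*∈D(f), α* odd} |f_{α*}| λ_f(α*,α) − Σ_{α*∈D(f), α* even} min{0,f_{α*}} λ_f(α*,α)`,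
then `f` is coercive on `ℝⁿ`. -/
theorem stmt0 {n : ℕ} (f : MvPolynomial (Fin n) ℝ)
    (hC1 : CondC1 f) (hC2 : CondC2 f) (hC3 : CondC3 f)
    (lam : (Fin n →₀ ℕ) → (Fin n →₀ ℕ) → ℝ) (hlam : IsMinBary f lam)
    (hineq : ∀ α ∈ Vinf f,
      f.coeff α >
        (∑ αs ∈ (Dfin f).filter fun αs => ¬ IsEvenExp αs, |f.coeff αs| * lam αs α)
          - ∑ αs ∈ (Dfin f).filter fun αs => IsEvenExp αs, min 0 (f.coeff αs) * lam αs α) :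
    Coercive fun x => MvPolynomial.eval x f := by
  classical
  rcases Nat.eq_zero_or_pos n with hn | hn
  · subst hn
    have hbot : comap (fun x : Fin 0 → ℝ => ‖x‖) atTop = (⊥ : Filter (Fin 0 → ℝ)) := by
      rw [← Filter.empty_mem_iff_bot]
      refine Filter.mem_comap.2 ⟨Set.Ioi 0, Ioi_mem_atTop 0, ?_⟩
      intro x hx
      have hx0 : x = 0 := Subsingleton.elim x 0
      rw [Set.mem_preimage, hx0, norm_zero] at hx
      exact absurd (Set.mem_Ioi.1 hx) (lt_irrefl 0)
    rw [Coercive, hbot]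
    exact tendsto_bot
  -- setup
  set wgt : (Fin n →₀ ℕ) → ℝ :=
    fun αs => if IsEvenExp αs then -(min 0 (f.coeff αs)) else |f.coeff αs| with hwgt
  have hwgt0 : ∀ αs, 0 ≤ wgt αs := by
    intro αs
    simp only [hwgt]
    split
    · simp [min_le_iff]
    · exact abs_nonneg _
  set Bud : (Fin n →₀ ℕ) → ℝ := fun α => ∑ αs ∈ Dfin f, wgt αs * lam αs α with hBud
  have hBudlt : ∀ α ∈ Vinf f, Bud α < f.coeff α := by
    intro α hα
    have h := hineq α hα
    have hsplit := Finset.sum_filter_add_sum_filter_not (Dfin f)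
      (fun αs => IsEvenExp αs) (fun αs => wgt αs * lam αs α)
    have he : ∀ αs ∈ (Dfin f).filter (fun αs => IsEvenExp αs),
        wgt αs * lam αs α = -(min 0 (f.coeff αs) * lam αs α) := by
      intro αs hαs
      have := (Finset.mem_filter.1 hαs).2
      simp only [hwgt, if_pos this]; ring
    have ho : ∀ αs ∈ (Dfin f).filter (fun αs => ¬ IsEvenExp αs),
        wgt αs * lam αs α = |f.coeff αs| * lam αs α := by
      intro αs hαs
      have := (Finset.mem_filter.1 hαs).2
      simp only [hwgt, if_neg this]
    calc Bud α = (∑ αs ∈ (Dfin f).filter (fun αs => IsEvenExp αs), wgt αs * lam αs α)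
          + ∑ αs ∈ (Dfin f).filter (fun αs => ¬ IsEvenExp αs), wgt αs * lam αs α := by
          rw [hBud]; exact hsplit.symm
      _ = (∑ αs ∈ (Dfin f).filter (fun αs => IsEvenExp αs), -(min 0 (f.coeff αs) * lam αs α))
          + ∑ αs ∈ (Dfin f).filter (fun αs => ¬ IsEvenExp αs), |f.coeff αs| * lam αs α := by
          rw [Finset.sum_congr rfl he, Finset.sum_congr rfl ho]
      _ = (∑ αs ∈ (Dfin f).filter (fun αs => ¬ IsEvenExp αs), |f.coeff αs| * lam αs α)
          - ∑ αs ∈ (Dfin f).filter (fun αs => IsEvenExp αs), min 0 (f.coeff αs) * lam αs α := by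
          rw [Finset.sum_neg_distrib]; ring
      _ < f.coeff α := h
  -- the minimum margin over vertices at infinity
  have hVne : (Vinf f).Nonempty := by
    obtain ⟨k, hk, hkV⟩ := hC3 ⟨0, hn⟩
    exact ⟨_, hkV⟩
  obtain ⟨α₀, hα₀, hmin⟩ := Finset.exists_min_image (Vinf f)
    (fun α => f.coeff α - Bud α) hVne
  set c : ℝ := f.coeff α₀ - Bud α₀ with hc
  have hcpos : 0 < c := by
    have := hBudlt α₀ hα₀
    simp only [hc]; linarith
  have hcmin : ∀ α ∈ Vinf f, c ≤ f.coeff α - Bud α := fun α hα => hmin α hα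
  -- the partition of the support
  have hV : Vinf f ⊆ f.support := Vinf_subset_support f
  have hD : Dfin f ⊆ f.support \ Vinf f := by
    intro αs hαs
    have h1 := Finset.mem_filter.1 hαs
    exact Finset.mem_sdiff.2 ⟨h1.1, h1.2.2.1⟩
  set R : Finset (Fin n →₀ ℕ) := (f.support \ Vinf f) \ Dfin f with hR
  set ND : Finset (Fin n →₀ ℕ) := R.erase 0 with hND
  have hNDprop : ∀ αs ∈ ND, αs ∈ f.support ∧ αs ∉ Vinf f ∧
      ¬ IsGemDegenerate f αs ∧ αs ≠ 0 := by
    intro αs hαs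
    have h0 := Finset.mem_erase.1 hαs
    have h1 := Finset.mem_sdiff.1 h0.2
    have h2 := Finset.mem_sdiff.1 h1.1
    refine ⟨h2.1, h2.2, fun hdeg => h1.2 (Finset.mem_filter.2 ⟨h2.1, hdeg⟩), h0.1⟩
  -- absorption constants for the non-degenerate part
  set K : ℝ := ∑ αs ∈ ND, |f.coeff αs| with hK
  have hK0 : 0 ≤ K := Finset.sum_nonneg fun αs _ => abs_nonneg _
  set ε : ℝ := c / (2 * (K + 1)) with hε
  have hεpos : 0 < ε := by positivity
  have hchoice : ∀ αs ∈ ND, ∃ C : ℝ, ∀ x : Fin n → ℝ,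
      mmono x αs ≤ ε * Ssum f x + C := by
    intro αs hαs
    obtain ⟨h1, h2, h3, h4⟩ := hNDprop αs hαs
    exact nd_bound f h1 h2 h3 h4 hεpos
  choose! Cnd hCnd using hchoice
  -- degenerate exponents lie in V0c
  have hDV0c : ∀ αs ∈ Dfin f, αs ∈ V0c f := by
    intro αs hαs
    have h1 := Finset.mem_filter.1 hαs
    obtain ⟨hsupp, hnv, G, hGne, hGe, hG0, hmem⟩ := h1.2
    have hne : αs ≠ 0 := by
      rintro rfl
      rw [expEmbed_zero] at hmem
      exact hG0 hmem
    refine Finset.mem_sdiff.2 ⟨hsupp, fun hV0 => ?_⟩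
    exact hnv (Finset.mem_erase.2 ⟨hne, hV0⟩)
  -- the global constant
  set CC : ℝ := (∑ αs ∈ Dfin f, wgt αs * lam αs 0)
      + (∑ αs ∈ ND, |f.coeff αs| * Cnd αs) + |f.coeff 0| with hCC
  -- the key pointwise lower bound
  have key : ∀ x : Fin n → ℝ, c / 2 * Ssum f x - CC ≤ MvPolynomial.eval x f := by
    intro x
    set g : (Fin n →₀ ℕ) → ℝ := fun α => f.coeff α * ∏ i, x i ^ (α i) with hg
    have heval : MvPolynomial.eval x f = ∑ α ∈ f.support, g α :=
      MvPolynomial.eval_eq' x f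
    have hsplit1 : ∑ α ∈ f.support, g α
        = (∑ α ∈ f.support \ Vinf f, g α) + ∑ α ∈ Vinf f, g α :=
      (Finset.sum_sdiff hV).symm
    have hsplit2 : ∑ α ∈ f.support \ Vinf f, g α
        = (∑ α ∈ R, g α) + ∑ α ∈ Dfin f, g α := (Finset.sum_sdiff hD).symm
    -- (a) vertex part
    have hvert : (∑ α ∈ Vinf f, Bud α * mmono x α) + c * Ssum f x
        ≤ ∑ α ∈ Vinf f, g α := by
      have : ∀ α ∈ Vinf f, Bud α * mmono x α + c * mmono x α ≤ g α := by
        intro α hα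
        have hxe : (∏ i, x i ^ (α i)) = mmono x α := xprod_of_even x (hC1 α hα)
        have hm0 : 0 ≤ mmono x α := mmono_nonneg x α
        have := hcmin α hα
        simp only [hg, hxe]
        nlinarith
      calc (∑ α ∈ Vinf f, Bud α * mmono x α) + c * Ssum f x
          = ∑ α ∈ Vinf f, (Bud α * mmono x α + c * mmono x α) := by
            rw [Finset.sum_add_distrib, Ssum, Finset.mul_sum]
        _ ≤ ∑ α ∈ Vinf f, g α := Finset.sum_le_sum this
    -- (b) degenerate part
    have hdeg : -((∑ α ∈ Vinf f, Bud α * mmono x α)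
          + ∑ αs ∈ Dfin f, wgt αs * lam αs 0) ≤ ∑ αs ∈ Dfin f, g αs := by
      have hper : ∀ αs ∈ Dfin f,
          -(wgt αs * ((∑ α ∈ Vinf f, lam αs α * mmono x α) + lam αs 0)) ≤ g αs := by
        intro αs hαs
        have hb := deg_bound f lam hlam (hDV0c αs hαs) x
        have hbnn : 0 ≤ (∑ α ∈ Vinf f, lam αs α * mmono x α) + lam αs 0 :=
          le_trans (mmono_nonneg x αs) hb
        have hmnn : 0 ≤ mmono x αs := mmono_nonneg x αs
        by_cases hev : IsEvenExp αs
        · have hxe : (∏ i, x i ^ (αs i)) = mmono x αs := xprod_of_even x hev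
          have hmin0 : min 0 (f.coeff αs) ≤ 0 := min_le_left _ _
          have hminc : min 0 (f.coeff αs) ≤ f.coeff αs := min_le_right _ _
          simp only [hg, hxe, hwgt, if_pos hev, neg_neg]
          nlinarith
        · have habs : |∏ i, x i ^ (αs i)| = mmono x αs := abs_xprod x αs
          have h1 : -(|f.coeff αs| * mmono x αs) ≤ g αs := by
            have := neg_abs_le (g αs)
            have h2 : |g αs| = |f.coeff αs| * mmono x αs := by
              rw [hg, abs_mul, habs]
            linarith
          have h3 : |f.coeff αs| * mmono x αs
              ≤ |f.coeff αs| * ((∑ α ∈ Vinf f, lam αs α * mmono x α) + lam αs 0) :=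
            mul_le_mul_of_nonneg_left hb (abs_nonneg _)
          simp only [hwgt, if_neg hev]
          linarith
      have hsum := Finset.sum_le_sum hper
      have hswap : ∑ αs ∈ Dfin f, wgt αs * (∑ α ∈ Vinf f, lam αs α * mmono x α)
          = ∑ α ∈ Vinf f, Bud α * mmono x α := by
        calc ∑ αs ∈ Dfin f, wgt αs * (∑ α ∈ Vinf f, lam αs α * mmono x α)
            = ∑ αs ∈ Dfin f, ∑ α ∈ Vinf f, wgt αs * (lam αs α * mmono x α) := by
              refine Finset.sum_congr rfl fun αs _ => ?_
              rw [Finset.mul_sum]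
          _ = ∑ α ∈ Vinf f, ∑ αs ∈ Dfin f, wgt αs * (lam αs α * mmono x α) :=
              Finset.sum_comm
          _ = ∑ α ∈ Vinf f, Bud α * mmono x α := by
              refine Finset.sum_congr rfl fun α _ => ?_
              rw [hBud, Finset.sum_mul]
              refine Finset.sum_congr rfl fun αs _ => ?_
              ring
      calc -((∑ α ∈ Vinf f, Bud α * mmono x α) + ∑ αs ∈ Dfin f, wgt αs * lam αs 0)
          = ∑ αs ∈ Dfin f,
              -(wgt αs * ((∑ α ∈ Vinf f, lam αs α * mmono x α) + lam αs 0)) := by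
            rw [Finset.sum_neg_distrib, ← hswap, ← Finset.sum_add_distrib, neg_inj]
            refine Finset.sum_congr rfl fun αs _ => ?_
            ring
        _ ≤ ∑ αs ∈ Dfin f, g αs := hsum
    -- (c) non-degenerate part
    have hnd : -(c / 2 * Ssum f x + ∑ αs ∈ ND, |f.coeff αs| * Cnd αs)
        ≤ ∑ αs ∈ ND, g αs := by
      have hper : ∀ αs ∈ ND,
          -(|f.coeff αs| * (ε * Ssum f x + Cnd αs)) ≤ g αs := by
        intro αs hαs
        have hb := hCnd αs hαs x
        have habs : |∏ i, x i ^ (αs i)| = mmono x αs := abs_xprod x αs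
        have h1 : -(|f.coeff αs| * mmono x αs) ≤ g αs := by
          have := neg_abs_le (g αs)
          have h2 : |g αs| = |f.coeff αs| * mmono x αs := by
            rw [hg, abs_mul, habs]
          linarith
        have h3 : |f.coeff αs| * mmono x αs ≤ |f.coeff αs| * (ε * Ssum f x + Cnd αs) :=
          mul_le_mul_of_nonneg_left hb (abs_nonneg _)
        linarith
      have hsum := Finset.sum_le_sum hper
      have hS0 : 0 ≤ Ssum f x := Ssum_nonneg f x
      have hKε : K * (ε * Ssum f x) ≤ c / 2 * Ssum f x := by
        have hKK : K * ε ≤ c / 2 := by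
          rw [hε, ← mul_div_assoc, div_le_div_iff₀ (by positivity) two_pos]
          nlinarith
        nlinarith
      have heq : ∑ αs ∈ ND, -(|f.coeff αs| * (ε * Ssum f x + Cnd αs))
          = -(K * (ε * Ssum f x) + ∑ αs ∈ ND, |f.coeff αs| * Cnd αs) := by
        rw [hK, Finset.sum_mul, ← Finset.sum_add_distrib, ← Finset.sum_neg_distrib]
        refine Finset.sum_congr rfl fun αs _ => ?_
        ring
      rw [heq] at hsum
      linarith
    -- (d) the possible constant term
    have hconst : -|f.coeff 0| + ∑ αs ∈ ND, g αs ≤ ∑ α ∈ R, g α := by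
      by_cases h0 : (0 : Fin n →₀ ℕ) ∈ R
      · have := Finset.add_sum_erase R g h0
        have hg0 : g 0 = f.coeff 0 := by simp [hg]
        rw [← this, hg0, ← hND]
        have := neg_abs_le (f.coeff 0)
        linarith
      · have : R.erase 0 = R := Finset.erase_eq_of_notMem h0
        rw [hND, this]
        have : (0:ℝ) ≤ |f.coeff 0| := abs_nonneg _
        linarith
    rw [heval, hsplit1, hsplit2, hCC]
    have hhalf : c * Ssum f x = c / 2 * Ssum f x + c / 2 * Ssum f x := by ring
    have h5 := add_le_add (add_le_add hconst hdeg) hvert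
    clear_value wgt Bud c R ND K ε CC g
    linarith [h5, hnd]
  -- lower bound of `Ssum` by the norm
  have hS : ∀ x : Fin n → ℝ, 1 ≤ ‖x‖ → ‖x‖ ^ 2 ≤ Ssum f x := by
    intro x hx
    obtain ⟨i, -, hi⟩ := Finset.exists_max_image Finset.univ
      (fun i => |x i|) ⟨⟨0, hn⟩, Finset.mem_univ _⟩
    have hxi : ‖x‖ ≤ |x i| := by
      refine (pi_norm_le_iff_of_nonneg (abs_nonneg _)).2 fun j => ?_
      simpa [Real.norm_eq_abs] using hi j (Finset.mem_univ j)
    obtain ⟨k, hk, hkV⟩ := hC3 i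
    have hm : mmono x (Finsupp.single i (2 * k)) = |x i| ^ (2 * k) := by
      rw [mmono, Finset.prod_eq_single i]
      · rw [Finsupp.single_eq_same]
      · intro j _ hj
        rw [Finsupp.single_eq_of_ne' (Ne.symm hj), pow_zero]
      · intro h
        exact absurd (Finset.mem_univ i) h
    have h1 : |x i| ^ (2 * k) ≤ Ssum f x := hm ▸ mmono_le_Ssum f x hkV
    have hxi1 : 1 ≤ |x i| := hx.trans hxi
    have h2 : |x i| ^ 2 ≤ |x i| ^ (2 * k) :=
      pow_le_pow_right₀ hxi1 (by omega)
    have h3 : ‖x‖ ^ 2 ≤ |x i| ^ 2 := pow_le_pow_left₀ (norm_nonneg x) hxi 2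
    linarith
  -- conclude
  rw [Coercive, tendsto_atTop]
  intro b
  rw [eventually_comap]
  set R₀ : ℝ := max 1 (Real.sqrt ((b + CC) * (2 / c))) with hR₀
  filter_upwards [eventually_ge_atTop R₀] with r hr x hx
  have hx1 : 1 ≤ ‖x‖ := by rw [hx]; exact le_trans (le_max_left _ _) hr
  have hSx := hS x hx1
  have hS0 : 0 ≤ Ssum f x := Ssum_nonneg f x
  have hkey := key x
  rcases le_or_gt (b + CC) 0 with hbc | hbc
  · linarith [mul_nonneg (by positivity : (0:ℝ) ≤ c / 2) hS0]
  · have hsq : (b + CC) * (2 / c) ≤ ‖x‖ ^ 2 := by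
      have h0 : 0 ≤ (b + CC) * (2 / c) := by positivity
      have h1 : Real.sqrt ((b + CC) * (2 / c)) ≤ ‖x‖ := by
        rw [hx]; exact le_trans (le_max_right _ _) hr
      calc (b + CC) * (2 / c) = Real.sqrt ((b + CC) * (2 / c)) ^ 2 :=
            (Real.sq_sqrt h0).symm
        _ ≤ ‖x‖ ^ 2 := pow_le_pow_left₀ (Real.sqrt_nonneg _) h1 2
    have h2 : (b + CC) * (2 / c) ≤ Ssum f x := le_trans hsq hSx
    have h3 : c / 2 * ((b + CC) * (2 / c)) ≤ c / 2 * Ssum f x :=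
      mul_le_mul_of_nonneg_left h2 (by positivity)
    have h4 : c / 2 * ((b + CC) * (2 / c)) = b + CC := by
      have hcne : c ≠ 0 := ne_of_gt hcpos
      field_simp
    linarith


end
end

section
/- Let f ∈ ℝ[x₁,…,xₙ] be coercive on ℝⁿ. Then f fulfills conditions (C1), (C2) and (C3); that is, every vertex at infinity of New∞(f) lies in (2ℕ₀)ⁿ, the coefficient of f at every vertex at infinity is positive, and for every i ∈ {1,…,n} the set V(f) contains a vector of the form 2k_i e_i with k_i ∈ ℕ. -/
open MvPolynomial Filter

noncomputable section

open scoped Classical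

private lemma expEmbed_inj {n : ℕ} : Function.Injective (expEmbed (n := n)) := by
  intro a b h
  ext i
  exact Nat.cast_injective (congrFun h i)

private lemma isLinear_dot {n : ℕ} (w : Fin n → ℝ) :
    IsLinearMap ℝ (fun q : Fin n → ℝ => ∑ j, w j * q j) := by
  constructor
  · intro p q; simp [mul_add, Finset.sum_add_distrib]
  · intro c p
    simp only [Pi.smul_apply, smul_eq_mul, Finset.mul_sum]
    exact Finset.sum_congr rfl fun j _ => by ring

private lemma key {n : ℕ} (f : MvPolynomial (Fin n) ℝ)
    (hcoer : Coercive fun x => MvPolynomial.eval x f)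
    (a : Fin n →₀ ℕ) (ha : a ∈ f.support) (ha0 : a ≠ 0)
    (w : Fin n → ℝ)
    (hdom : ∀ b ∈ insert (0 : Fin n →₀ ℕ) f.support, b ≠ a →
      ∑ i, w i * (b i : ℝ) < ∑ i, w i * (a i : ℝ))
    (ε : Fin n → ℝ) (hε : ∀ i, ε i = 1 ∨ ε i = -1) :
    0 < f.coeff a * ∏ i, ε i ^ (a i) := by
  set d : ℝ := ∑ i, w i * (a i : ℝ) with hd
  have hd0 : 0 < d := by
    have h := hdom 0 (Finset.mem_insert_self _ _) (Ne.symm ha0)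
    simpa using h
  obtain ⟨i₀, hi₀⟩ : ∃ i, 0 < w i * (a i : ℝ) := by
    by_contra h
    push_neg at h
    have : d ≤ 0 := Finset.sum_nonpos fun i _ => h i
    linarith
  have hw₀ : 0 < w i₀ := by
    rcases lt_or_ge 0 (w i₀) with h | h
    · exact h
    · nlinarith [Nat.cast_nonneg (α := ℝ) (a i₀)]
  set x : ℝ → Fin n → ℝ := fun t j => ε j * t ^ (w j) with hx
  have hεabs : ∀ j, |ε j| = 1 := fun j => by rcases hε j with h | h <;> simp [h]
  have hnorm : Tendsto (fun t => ‖x t‖) atTop atTop := by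
    apply tendsto_atTop_mono' atTop ?_ (tendsto_rpow_atTop hw₀)
    filter_upwards [eventually_ge_atTop (0:ℝ)] with t ht
    calc t ^ w i₀ = ‖x t i₀‖ := by
          simp only [hx, Real.norm_eq_abs, abs_mul, hεabs, one_mul,
            abs_of_nonneg (Real.rpow_nonneg ht _)]
    _ ≤ ‖x t‖ := norm_le_pi_norm _ i₀
  have h1 : Tendsto (fun t => MvPolynomial.eval (x t) f) atTop atTop :=
    hcoer.comp (tendsto_comap_iff.2 hnorm)
  set E : (Fin n →₀ ℕ) → ℝ := fun b => ∏ i, ε i ^ (b i) with hE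
  have hEne : ∀ b, E b ≠ 0 := by
    intro b
    apply Finset.prod_ne_zero_iff.2
    intro i _
    rcases hε i with h | h <;> rw [h] <;> exact pow_ne_zero _ (by norm_num)
  have heval : ∀ t : ℝ, 0 < t →
      MvPolynomial.eval (x t) f
        = ∑ b ∈ f.support, f.coeff b * (E b * t ^ (∑ i, w i * (b i : ℝ))) := by
    intro t ht
    rw [MvPolynomial.eval_eq']
    refine Finset.sum_congr rfl fun b _ => ?_
    congr 1
    simp only [hx, mul_pow]
    rw [Finset.prod_mul_distrib]
    congr 1
    rw [Real.rpow_sum_of_pos ht]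
    refine Finset.prod_congr rfl fun j _ => ?_
    rw [← Real.rpow_natCast (t ^ w j) (b j), ← Real.rpow_mul ht.le]
  set c : ℝ := f.coeff a * E a with hc
  have hsum : Tendsto (fun t => ∑ b ∈ f.support,
      f.coeff b * E b * t ^ ((∑ i, w i * (b i:ℝ)) - d)) atTop (nhds c) := by
    have hceq : c = ∑ b ∈ f.support, (if b = a then f.coeff b * E b else 0) := by
      rw [Finset.sum_ite_eq' f.support a (fun b => f.coeff b * E b)]
      simp [ha, hc]
    rw [hceq]
    apply tendsto_finset_sum
    intro b hb
    by_cases hba : b = a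
    · subst hba
      simp only [if_pos rfl, hd, sub_self, Real.rpow_zero, mul_one, ↓reduceIte]
      exact tendsto_const_nhds
    · simp only [if_neg hba]
      have hneg : 0 < d - (∑ i, w i * (b i:ℝ)) :=
        sub_pos.2 (hdom b (Finset.mem_insert_of_mem hb) hba)
      have h2 : Tendsto (fun t:ℝ => t ^ ((∑ i, w i * (b i:ℝ)) - d)) atTop (nhds 0) := by
        have := tendsto_rpow_neg_atTop hneg
        simpa [neg_sub] using this
      simpa using h2.const_mul (f.coeff b * E b)
  have hGg : (fun t => ∑ b ∈ f.support, f.coeff b * E b * t ^ ((∑ i, w i * (b i:ℝ)) - d))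
      =ᶠ[atTop] fun t => MvPolynomial.eval (x t) f * t ^ (-d) := by
    filter_upwards [eventually_gt_atTop (0:ℝ)] with t ht
    rw [heval t ht, Finset.sum_mul]
    refine Finset.sum_congr rfl fun b _ => ?_
    rw [sub_eq_add_neg, Real.rpow_add ht]
    ring
  have hg : Tendsto (fun t => MvPolynomial.eval (x t) f * t ^ (-d)) atTop (nhds c) :=
    hsum.congr' hGg
  have hnn : 0 ≤ c := by
    apply ge_of_tendsto hg
    filter_upwards [h1.eventually_ge_atTop 0, eventually_gt_atTop (0:ℝ)] with t h0 ht
    exact mul_nonneg h0 (Real.rpow_nonneg ht.le _)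
  have hne : c ≠ 0 := mul_ne_zero (MvPolynomial.mem_support_iff.1 ha) (hEne a)
  exact lt_of_le_of_ne hnn (Ne.symm hne)

private lemma sep {n : ℕ} (f : MvPolynomial (Fin n) ℝ) {a : Fin n →₀ ℕ} (ha : a ∈ Vinf f) :
    a ≠ 0 ∧ a ∈ insert (0:Fin n →₀ ℕ) f.support ∧
      ∃ w : Fin n → ℝ, ∀ b ∈ insert (0:Fin n →₀ ℕ) f.support, b ≠ a →
        ∑ i, w i * (b i : ℝ) < ∑ i, w i * (a i : ℝ) := by
  rw [Vinf, Finset.mem_erase] at ha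
  obtain ⟨ha0, haV⟩ := ha
  rw [V0, Finset.mem_filter] at haV
  obtain ⟨haS, hext⟩ := haV
  refine ⟨ha0, haS, ?_⟩
  set P : Set (Fin n → ℝ) :=
    expEmbed '' ((insert 0 f.support : Finset (Fin n →₀ ℕ)) : Set (Fin n →₀ ℕ)) with hP
  have hPfin : P.Finite := ((insert 0 f.support : Finset (Fin n →₀ ℕ)).finite_toSet.image _)
  have hnot : expEmbed a ∉ convexHull ℝ (P \ {expEmbed a}) := by
    have h2 := (convex_convexHull ℝ P).mem_extremePoints_iff_mem_diff_convexHull_diff.1 hext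
    intro hmem
    exact h2.2 (convexHull_mono (Set.diff_subset_diff_left (subset_convexHull ℝ P)) hmem)
  have hK : IsClosed (convexHull ℝ (P \ {expEmbed a})) :=
    ((hPfin.subset Set.diff_subset).isCompact_convexHull ℝ).isClosed
  obtain ⟨L, u, hLa, hLb⟩ :=
    geometric_hahn_banach_point_closed (convex_convexHull ℝ _) hK hnot
  have hdot : ∀ p : Fin n → ℝ, L p = ∑ j, p j * L (Pi.single j 1) := by
    intro p
    conv_lhs => rw [pi_eq_sum_univ p]
    rw [map_sum]
    refine Finset.sum_congr rfl fun j _ => ?_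
    rw [map_smul, smul_eq_mul]
    congr 2
    ext k
    simp [Pi.single_apply, eq_comm]
  have key2 : ∀ (cc : Fin n →₀ ℕ),
      ∑ i, -(L (Pi.single i 1)) * (cc i : ℝ) = -(L (expEmbed cc)) := by
    intro cc
    rw [hdot (expEmbed cc), ← Finset.sum_neg_distrib]
    refine Finset.sum_congr rfl fun j _ => ?_
    show -(L (Pi.single j 1)) * (cc j:ℝ) = -(expEmbed cc j * L (Pi.single j 1))
    simp [expEmbed]; ring
  refine ⟨fun j => -(L (Pi.single j 1)), fun b hb hba => ?_⟩
  have hbP : expEmbed b ∈ P \ {expEmbed a} := by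
    refine ⟨Set.mem_image_of_mem _ (by exact_mod_cast hb), ?_⟩
    simp only [Set.mem_singleton_iff]
    exact fun h => hba (expEmbed_inj h)
  have h1 : u < L (expEmbed b) := hLb _ (subset_convexHull ℝ _ hbP)
  rw [key2 b, key2 a]
  have : L (expEmbed a) < L (expEmbed b) := lt_trans hLa h1
  linarith

private lemma exposed_extreme {n : ℕ} (f : MvPolynomial (Fin n) ℝ) (w : Fin n → ℝ)
    (a : Fin n →₀ ℕ) (haS : a ∈ insert (0:Fin n →₀ ℕ) f.support) (ha0 : a ≠ 0)
    (hlt : ∀ b ∈ insert (0:Fin n →₀ ℕ) f.support, b ≠ a →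
      ∑ i, w i * (b i:ℝ) < ∑ i, w i * (a i:ℝ)) :
    expEmbed a ∈ Set.extremePoints ℝ (newtonInfty f) := by
  set S : Finset (Fin n →₀ ℕ) := insert 0 f.support with hS
  set P : Set (Fin n → ℝ) := expEmbed '' (S : Set (Fin n →₀ ℕ)) with hP
  have hNP : newtonInfty f = convexHull ℝ P := rfl
  set L : (Fin n → ℝ) → ℝ := fun q => ∑ j, w j * q j with hL
  have hLlin : IsLinearMap ℝ L := isLinear_dot w
  set m : ℝ := ∑ i, w i * (a i : ℝ) with hm
  have hLa : L (expEmbed a) = m := rfl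
  set T : Finset (Fin n →₀ ℕ) := S.erase a with hT
  have hTne : T.Nonempty := ⟨0, Finset.mem_erase.2 ⟨Ne.symm ha0, Finset.mem_insert_self _ _⟩⟩
  set m' : ℝ := T.sup' hTne (fun b => ∑ j, w j * (b j:ℝ)) with hm'
  have hm'm : m' < m := by
    apply (Finset.sup'_lt_iff hTne).2
    intro b hb
    rw [Finset.mem_erase] at hb
    exact hlt b hb.2 hb.1
  have hhull' : convexHull ℝ (P \ {expEmbed a}) ⊆ {q | L q ≤ m'} := by
    apply convexHull_min ?_ (convex_halfSpace_le hLlin m')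
    rintro q ⟨⟨b, hb, rfl⟩, hne⟩
    have hbT : b ∈ T := Finset.mem_erase.2 ⟨fun h => hne (by rw [h]; rfl), by exact_mod_cast hb⟩
    exact Finset.le_sup' (fun b => ∑ j, w j * ((b : Fin n →₀ ℕ) j:ℝ)) hbT
  have hQne : (P \ {expEmbed a}).Nonempty :=
    ⟨expEmbed 0, ⟨Set.mem_image_of_mem _ (by exact_mod_cast Finset.mem_insert_self 0 f.support),
      by simp only [Set.mem_singleton_iff]; exact fun h => ha0 (expEmbed_inj h).symm⟩⟩
  have hPsplit : P = insert (expEmbed a) (P \ {expEmbed a}) := by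
    rw [Set.insert_diff_singleton, Set.insert_eq_of_mem]
    exact Set.mem_image_of_mem _ (by exact_mod_cast haS)
  have hmain : ∀ q ∈ newtonInfty f, L q ≤ m ∧ (L q = m → q = expEmbed a) := by
    intro q hq
    rw [hNP, hPsplit, convexHull_insert hQne, mem_convexJoin] at hq
    obtain ⟨x, hx, y, hy, hseg⟩ := hq
    rw [Set.mem_singleton_iff] at hx
    subst hx
    obtain ⟨a', b', ha', hb', hab, heq⟩ := hseg
    have hLy : L y ≤ m' := hhull' hy
    have hLq : L q = a' * m + b' * L y := by
      rw [← heq, hLlin.map_add, hLlin.map_smul, hLlin.map_smul, smul_eq_mul, smul_eq_mul, hLa]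
    have habm : a' * m + b' * m = m := by rw [← add_mul, hab, one_mul]
    have hbly : b' * L y ≤ b' * m' := mul_le_mul_of_nonneg_left hLy hb'
    have hblm : b' * m' ≤ b' * m := mul_le_mul_of_nonneg_left hm'm.le hb'
    constructor
    · linarith
    · intro hqm
      rcases eq_or_lt_of_le hb' with hb0 | hbpos
      · have ha1 : a' = 1 := by linarith
        rw [← heq, ← hb0, ha1]
        simp
      · exfalso
        have h5 : b' * m' < b' * m := mul_lt_mul_of_pos_left hm'm hbpos
        linarith
  refine ⟨subset_convexHull ℝ P (Set.mem_image_of_mem _ (by exact_mod_cast haS)), ?_⟩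
  intro x₁ h₁ x₂ h₂ hseg
  obtain ⟨a', b', ha', hb', hab, heq⟩ := hseg
  have hLs : a' * L x₁ + b' * L x₂ = m := by
    rw [← hLa, ← heq, hLlin.map_add, hLlin.map_smul, hLlin.map_smul, smul_eq_mul, smul_eq_mul]
  have hle1 := (hmain x₁ h₁).1
  have hle2 := (hmain x₂ h₂).1
  have habm : a' * m + b' * m = m := by rw [← add_mul, hab, one_mul]
  have he1 : L x₁ = m := by
    by_contra h
    have hx1 : L x₁ < m := lt_of_le_of_ne hle1 h
    have h4 : a' * L x₁ < a' * m := mul_lt_mul_of_pos_left hx1 ha'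
    have h5 : b' * L x₂ ≤ b' * m := mul_le_mul_of_nonneg_left hle2 hb'.le
    linarith
  have he2 : L x₂ = m := by
    by_contra h
    have hx1 : L x₂ < m := lt_of_le_of_ne hle2 h
    have h4 : b' * L x₂ < b' * m := mul_lt_mul_of_pos_left hx1 hb'
    have h5 : a' * L x₁ ≤ a' * m := mul_le_mul_of_nonneg_left hle1 ha'.le
    linarith
  exact (hmain x₁ h₁).2 he1

/-- Theorem: necessary conditions for coercivity.
A coercive polynomial fulfills (C1), (C2) and (C3). -/
theorem stmt4 {n : ℕ} (f : MvPolynomial (Fin n) ℝ)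
    (hcoer : Coercive fun x => MvPolynomial.eval x f) :
    CondC1 f ∧ CondC2 f ∧ CondC3 f := by
  have hC2 : CondC2 f := by
    intro a ha
    obtain ⟨ha0, haS, w, hw⟩ := sep f ha
    have haS' : a ∈ f.support := by
      rcases Finset.mem_insert.1 haS with h | h
      · exact absurd h ha0
      · exact h
    have h := key f hcoer a haS' ha0 w hw (fun _ => 1) (fun _ => Or.inl rfl)
    simpa using h
  have hC1 : CondC1 f := by
    intro a ha i
    obtain ⟨ha0, haS, w, hw⟩ := sep f ha
    have haS' : a ∈ f.support := by
      rcases Finset.mem_insert.1 haS with h | h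
      · exact absurd h ha0
      · exact h
    have hε : ∀ j, (if j = i then (-1:ℝ) else 1) = 1 ∨ (if j = i then (-1:ℝ) else 1) = -1 := by
      intro j; by_cases hj : j = i <;> simp [hj]
    have h := key f hcoer a haS' ha0 w hw (fun j => if j = i then (-1:ℝ) else 1) hε
    have hprod : ∏ j, (if j = i then (-1:ℝ) else 1) ^ (a j) = (-1:ℝ) ^ (a i) := by
      rw [Finset.prod_eq_single i (fun j _ hj => by rw [if_neg hj, one_pow])
        (fun hni => absurd (Finset.mem_univ i) hni), if_pos rfl]
    rw [hprod] at h
    rcases Nat.even_or_odd (a i) with he | ho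
    · exact he
    · exfalso
      rw [ho.neg_one_pow] at h
      have h2 := hC2 a ha
      nlinarith
  refine ⟨hC1, hC2, ?_⟩
  intro i
  set T : Finset (Fin n →₀ ℕ) := f.support.filter (fun b => ∀ j, j ≠ i → b j = 0) with hTdef
  have heval : ∀ t : ℝ, MvPolynomial.eval (Pi.single i t) f
      = ∑ b ∈ T, f.coeff b * t ^ (b i) := by
    intro t
    rw [MvPolynomial.eval_eq']
    rw [← Finset.sum_filter_add_sum_filter_not f.support (fun b => ∀ j, j ≠ i → b j = 0)]
    have h2 : ∀ b ∈ f.support.filter (fun b => ¬ ∀ j, j ≠ i → b j = 0),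
        f.coeff b * ∏ j, (Pi.single i t : Fin n → ℝ) j ^ b j = 0 := by
      intro b hb
      obtain ⟨-, hb2⟩ := Finset.mem_filter.1 hb
      push_neg at hb2
      obtain ⟨j₀, hj₀ne, hj₀⟩ := hb2
      have hz : (Pi.single i t : Fin n → ℝ) j₀ ^ b j₀ = 0 := by
        rw [Pi.single_eq_of_ne hj₀ne]
        exact zero_pow hj₀
      rw [Finset.prod_eq_zero (Finset.mem_univ j₀) hz, mul_zero]
    rw [Finset.sum_eq_zero h2, add_zero]
    refine Finset.sum_congr rfl fun b hb => ?_
    obtain ⟨-, hb2⟩ := Finset.mem_filter.1 hb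
    congr 1
    rw [Finset.prod_eq_single i (fun j _ hj => by rw [hb2 j hj, pow_zero])
      (fun hni => absurd (Finset.mem_univ i) hni), Pi.single_eq_same]
  have hnorm : Tendsto (fun t : ℝ => ‖(Pi.single i t : Fin n → ℝ)‖) atTop atTop := by
    apply tendsto_atTop_mono' atTop ?_ tendsto_id
    filter_upwards [eventually_ge_atTop (0:ℝ)] with t ht
    calc (id t : ℝ) = t := rfl
    _ ≤ |t| := le_abs_self t
    _ = ‖(Pi.single i t : Fin n → ℝ) i‖ := by rw [Pi.single_eq_same]; rfl
    _ ≤ ‖(Pi.single i t : Fin n → ℝ)‖ := norm_le_pi_norm _ i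
  have h1 : Tendsto (fun t : ℝ => MvPolynomial.eval (Pi.single i t) f) atTop atTop :=
    hcoer.comp (tendsto_comap_iff.2 hnorm)
  have hTex : ∃ b ∈ T, b i ≠ 0 := by
    by_contra h
    push_neg at h
    have hconst : ∀ t : ℝ, MvPolynomial.eval (Pi.single i t) f = ∑ b ∈ T, f.coeff b := by
      intro t
      rw [heval]
      exact Finset.sum_congr rfl fun b hb => by rw [h b hb, pow_zero, mul_one]
    obtain ⟨t, ht⟩ := (tendsto_atTop.1 h1 ((∑ b ∈ T, f.coeff b) + 1)).exists
    rw [hconst t] at ht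
    linarith
  obtain ⟨b₀, hb₀T, hb₀i⟩ := hTex
  set M : Finset ℕ := T.image (fun b => b i) with hMdef
  have hMne : M.Nonempty := ⟨b₀ i, Finset.mem_image_of_mem _ hb₀T⟩
  set m : ℕ := M.max' hMne with hmdef
  have hm0 : 0 < m :=
    lt_of_lt_of_le (Nat.pos_of_ne_zero hb₀i) (Finset.le_max' M _ (Finset.mem_image_of_mem _ hb₀T))
  obtain ⟨b₁, hb₁T, hb₁⟩ := Finset.mem_image.1 (M.max'_mem hMne)
  have hb₁eq : b₁ = Finsupp.single i m := by
    ext j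
    by_cases hj : j = i
    · rw [hj, Finsupp.single_eq_same, hb₁]
    · rw [Finsupp.single_eq_of_ne' (Ne.symm hj), (Finset.mem_filter.1 hb₁T).2 j hj]
  have haS : Finsupp.single i m ∈ f.support := hb₁eq ▸ (Finset.mem_filter.1 hb₁T).1
  have ha0 : Finsupp.single i m ≠ 0 := by
    simp [Finsupp.single_eq_zero, hm0.ne']
  -- axis elements of T are determined: b ∈ T → b = single i (b i) and b i ≤ m
  have haxis : ∀ b ∈ T, b = Finsupp.single i (b i) ∧ b i ≤ m := by
    intro b hb
    constructor
    · ext j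
      by_cases hj : j = i
      · rw [hj, Finsupp.single_eq_same]
      · rw [Finsupp.single_eq_of_ne' (Ne.symm hj), (Finset.mem_filter.1 hb).2 j hj]
    · exact Finset.le_max' M _ (Finset.mem_image_of_mem _ hb)
  set B : ℕ := f.support.sup (fun b => b i) with hBdef
  set w : Fin n → ℝ := fun j => if j = i then 1 else -((B:ℝ)+1) with hwdef
  have hwsum : ∀ b : Fin n →₀ ℕ,
      ∑ j, w j * (b j : ℝ) = (b i : ℝ) + ∑ j ∈ Finset.univ.erase i, -((B:ℝ)+1) * (b j : ℝ) := by
    intro b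
    rw [← Finset.sum_erase_add _ _ (Finset.mem_univ i)]
    have hwi : w i * (b i : ℝ) = (b i : ℝ) := by simp [hwdef]
    rw [hwi, add_comm]
    congr 1
    refine Finset.sum_congr rfl fun j hj => ?_
    have hwj : w j = -((B:ℝ)+1) := by simp [hwdef, (Finset.mem_erase.1 hj).1]
    rw [hwj]
  have hwa : ∑ j, w j * ((Finsupp.single i m : Fin n →₀ ℕ) j : ℝ) = (m : ℝ) := by
    rw [hwsum]
    rw [Finsupp.single_eq_same]
    rw [Finset.sum_eq_zero, add_zero]
    intro j hj
    rw [Finsupp.single_eq_of_ne' (Ne.symm (Finset.mem_erase.1 hj).1), Nat.cast_zero, mul_zero]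
  have hlt : ∀ b ∈ insert (0:Fin n →₀ ℕ) f.support, b ≠ Finsupp.single i m →
      ∑ j, w j * (b j:ℝ) < ∑ j, w j * ((Finsupp.single i m : Fin n →₀ ℕ) j:ℝ) := by
    intro b hb hbne
    rw [hwa, hwsum]
    by_cases hax : ∀ j, j ≠ i → b j = 0
    · have hzero : ∑ j ∈ Finset.univ.erase i, -((B:ℝ)+1) * (b j : ℝ) = 0 := by
        apply Finset.sum_eq_zero
        intro j hj
        rw [hax j (Finset.mem_erase.1 hj).1, Nat.cast_zero, mul_zero]
      rw [hzero, add_zero]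
      have hbi : b i < m := by
        rcases Finset.mem_insert.1 hb with h | h
        · rw [h]
          simpa using hm0
        · have hbT : b ∈ T := Finset.mem_filter.2 ⟨h, hax⟩
          have h2 := (haxis b hbT).2
          rcases lt_or_eq_of_le h2 with h3 | h3
          · exact h3
          · exact absurd ((haxis b hbT).1.trans (by rw [h3])) hbne
      exact_mod_cast hbi
    · push_neg at hax
      obtain ⟨j₀, hj₀ne, hj₀⟩ := hax
      have hbiB : b i ≤ B := by
        rcases Finset.mem_insert.1 hb with h | h
        · rw [h]; simp
        · exact Finset.le_sup (f := fun b => b i) h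
      have hsle : ∑ j ∈ Finset.univ.erase i, -((B:ℝ)+1) * (b j : ℝ) ≤ -((B:ℝ)+1) := by
        have hone : (1:ℝ) ≤ ∑ j ∈ Finset.univ.erase i, (b j : ℝ) := by
          have := Finset.single_le_sum (f := fun j => ((b j : ℝ)))
            (fun j _ => Nat.cast_nonneg _) (Finset.mem_erase.2 ⟨hj₀ne, Finset.mem_univ j₀⟩)
          have h1' : (1:ℝ) ≤ (b j₀ : ℝ) := by exact_mod_cast Nat.one_le_iff_ne_zero.2 hj₀
          linarith
        calc ∑ j ∈ Finset.univ.erase i, -((B:ℝ)+1) * (b j : ℝ)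
            = -(((B:ℝ)+1) * ∑ j ∈ Finset.univ.erase i, (b j : ℝ)) := by
              rw [Finset.mul_sum, ← Finset.sum_neg_distrib]
              exact Finset.sum_congr rfl fun j _ => by ring
        _ ≤ -(((B:ℝ)+1) * 1) := by
              apply neg_le_neg
              apply mul_le_mul_of_nonneg_left hone
              positivity
        _ = -((B:ℝ)+1) := by ring
      have hBb : (b i : ℝ) ≤ (B:ℝ) := by exact_mod_cast hbiB
      have hm1 : (1:ℝ) ≤ (m:ℝ) := by exact_mod_cast hm0
      linarith
  have hext := exposed_extreme f w (Finsupp.single i m)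
    (Finset.mem_insert_of_mem haS) ha0 hlt
  have hV : Finsupp.single i m ∈ Vinf f := by
    rw [Vinf, Finset.mem_erase]
    refine ⟨ha0, ?_⟩
    rw [V0, Finset.mem_filter]
    exact ⟨Finset.mem_insert_of_mem haS, hext⟩
  have heven : Even m := by
    have := hC1 _ hV i
    simpa using this
  obtain ⟨k, hk⟩ := heven
  refine ⟨k, ?_, ?_⟩
  · omega
  · have : 2 * k = m := by omega
    rw [this]
    exact hV
end
end
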